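/- For every real α, every real x and every n ∈ ℕ with n ≥ 2, one has (−1)^n·E^{(α)}_n(x) = L_{n+1} − (x − α/2 + 3)·L_n + Σ_{k=2}^{n} (−1)^k·(E^{(α)}_k(x) + 3·E^{(α)}_{k−1}(x))·L_{n−k+1} + 5·Σ_{k=2}^{n} Σ_{s=0}^{k−2} (−1)^k·2^{k−s−2}·L_{n−k+1}·E^{(α)}_s(x). -/

import Mathlib

noncomputable section

/-- `E α x k` is the generalized Euler polynomial `E_k^{(α)}(x)`, characterized by the
generating function `(2/(e^z+1))^α e^{xz} = Σ_k E_k^{(α)}(x) z^k / k!` for `|z| < π`. -/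
def IsGenEulerFamily (E : ℝ → ℝ → ℕ → ℝ) : Prop :=
  ∀ α x z : ℝ, |z| < Real.pi →
    HasSum (fun k : ℕ => E α x k * z ^ k / (Nat.factorial k : ℝ))
      ((2 / (Real.exp z + 1)) ^ α * Real.exp (x * z))

/-- The Lucas sequence: `L_1 = 1`, `L_2 = 3`, `L_{m+2} = L_{m+1} + L_m` (so `L_0 = 2`). -/
def lucasSeq : ℕ → ℕ
  | 0 => 2
  | 1 => 1
  | m + 2 => lucasSeq (m + 1) + lucasSeq m

lemma lucas_key (m : ℕ) (hm : 2 ≤ m) :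
    (lucasSeq (m+1) : ℝ) - 3 * (lucasSeq m : ℝ)
      + 5 * ∑ t ∈ Finset.range (m-1), (-1:ℝ)^t * 2^t * (lucasSeq (m-1-t) : ℝ) = 0 := by
  obtain ⟨j, rfl⟩ : ∃ j, m = j + 2 := ⟨m - 2, by omega⟩
  clear hm
  induction j with
  | zero => norm_num [lucasSeq]
  | succ i ih =>
    have hshift : ∑ t ∈ Finset.range (i+1+2-1), (-1:ℝ)^t * 2^t * (lucasSeq (i+1+2-1-t) : ℝ)
        = (-2) * (∑ t ∈ Finset.range (i+2-1), (-1:ℝ)^t * 2^t * (lucasSeq (i+2-1-t) : ℝ))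
          + (lucasSeq (i+2) : ℝ) := by
      have : i+1+2-1 = (i+1)+1 := by omega
      rw [this, Finset.sum_range_succ']
      rw [Finset.mul_sum]
      congr 1
      · apply Finset.sum_congr rfl
        intro t ht
        have h1 : i+1+1-(t+1) = i+2-1-t := by omega
        rw [h1]
        ring
      · simp
    rw [hshift]
    have h4 : (lucasSeq (i+1+2+1) : ℝ) = (lucasSeq (i+2+1) : ℝ) + (lucasSeq (i+2) : ℝ) := by
      show (lucasSeq (i+2+2) : ℝ) = _
      rw [show lucasSeq (i+2+2) = lucasSeq (i+2+1) + lucasSeq (i+2) from rfl]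
      push_cast; ring
    rw [h4]
    linarith [ih]

lemma icc_to_range (f : ℕ → ℝ) (m n : ℕ) :
    ∑ i ∈ Finset.Icc m n, f i = ∑ i ∈ Finset.range (n+1-m), f (m+i) := by
  rw [← Finset.Ico_add_one_right_eq_Icc, Finset.sum_Ico_eq_sum_range]

lemma tele (f : ℕ → ℝ) (m : ℕ) :
    ∑ i ∈ Finset.range m, (f (i+1) - f i) = f m - f 0 := Finset.sum_range_sub f m

lemma main_comb (e : ℕ → ℝ) (h0 : e 0 = 1) (n : ℕ) (hn : 2 ≤ n) :
    (-1:ℝ)^n * e n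
      = (lucasSeq (n+1) : ℝ) - (e 1 + 3) * (lucasSeq n : ℝ)
        + ∑ k ∈ Finset.Icc 2 n, (-1:ℝ)^k * (e k + 3 * e (k-1)) * (lucasSeq (n-k+1) : ℝ)
        + 5 * ∑ k ∈ Finset.Icc 2 n, ∑ s ∈ Finset.Icc 0 (k-2),
            (-1:ℝ)^k * 2^(k-s-2) * (lucasSeq (n-k+1) : ℝ) * e s := by
  -- swap the double sum
  have hB : (∑ k ∈ Finset.Icc 2 n, ∑ s ∈ Finset.Icc 0 (k-2),
        (-1:ℝ)^k * 2^(k-s-2) * (lucasSeq (n-k+1) : ℝ) * e s)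
      = ∑ s ∈ Finset.Icc 0 (n-2), ∑ k ∈ Finset.Icc (s+2) n,
        (-1:ℝ)^k * 2^(k-s-2) * (lucasSeq (n-k+1) : ℝ) * e s := by
    apply Finset.sum_comm'
    intro k s
    simp only [Finset.mem_Icc]
    omega
  -- evaluate the inner sum via lucas_key
  have hInner : ∀ s, s ≤ n - 2 →
      (5:ℝ) * ∑ k ∈ Finset.Icc (s+2) n, (-1:ℝ)^k * 2^(k-s-2) * (lucasSeq (n-k+1) : ℝ)
        = (-1:ℝ)^s * (3 * (lucasSeq (n-s) : ℝ) - (lucasSeq (n-s+1) : ℝ)) := by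
    intro s hs
    rw [icc_to_range]
    have hcard : n + 1 - (s+2) = (n-s) - 1 := by omega
    rw [hcard]
    have hsum : ∑ i ∈ Finset.range ((n-s)-1),
        (-1:ℝ)^(s+2+i) * 2^(s+2+i-s-2) * (lucasSeq (n-(s+2+i)+1) : ℝ)
        = (-1:ℝ)^s * ∑ t ∈ Finset.range ((n-s)-1),
            (-1:ℝ)^t * 2^t * (lucasSeq ((n-s)-1-t) : ℝ) := by
      rw [Finset.mul_sum]
      apply Finset.sum_congr rfl
      intro t ht
      simp only [Finset.mem_range] at ht
      have h1 : s+2+t-s-2 = t := by omega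
      have h2 : n-(s+2+t)+1 = (n-s)-1-t := by omega
      rw [h1, h2, pow_add, pow_add]
      ring
    have hk := lucas_key (n-s) (by omega)
    have : (5:ℝ) * ∑ t ∈ Finset.range ((n-s)-1),
        (-1:ℝ)^t * 2^t * (lucasSeq ((n-s)-1-t) : ℝ)
        = 3 * (lucasSeq (n-s) : ℝ) - (lucasSeq (n-s+1) : ℝ) := by linarith
    rw [hsum, ← mul_assoc, mul_comm (5:ℝ) ((-1:ℝ)^s), mul_assoc, this]
  -- rewrite 5B as a single range sum
  have hB2 : (5:ℝ) * ∑ s ∈ Finset.Icc 0 (n-2), ∑ k ∈ Finset.Icc (s+2) n,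
        (-1:ℝ)^k * 2^(k-s-2) * (lucasSeq (n-k+1) : ℝ) * e s
      = ∑ i ∈ Finset.range (n-1),
          (3 * ((-1:ℝ)^i * e i * (lucasSeq (n-i) : ℝ))
            - (-1:ℝ)^i * e i * (lucasSeq (n-i+1) : ℝ)) := by
    rw [Finset.mul_sum, icc_to_range]
    have : n - 2 + 1 - 0 = n - 1 := by omega
    rw [this]
    apply Finset.sum_congr rfl
    intro i hi
    simp only [Finset.mem_range] at hi
    simp only [Nat.zero_add]
    rw [← Finset.sum_mul, ← mul_assoc, hInner i (by omega)]
    ring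
  -- rewrite A as a single range sum
  have hA : (∑ k ∈ Finset.Icc 2 n, (-1:ℝ)^k * (e k + 3 * e (k-1)) * (lucasSeq (n-k+1) : ℝ))
      = ∑ i ∈ Finset.range (n-1),
          ((-1:ℝ)^(i+2) * e (i+2) * (lucasSeq (n-(i+2)+1) : ℝ)
            - 3 * ((-1:ℝ)^(i+1) * e (i+1) * (lucasSeq (n-(i+1)) : ℝ))) := by
    rw [icc_to_range]
    have : n + 1 - 2 = n - 1 := by omega
    rw [this]
    apply Finset.sum_congr rfl
    intro i hi
    simp only [Finset.mem_range] at hi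
    have h1 : 2+i-1 = i+1 := by omega
    have h4 : 2+i = i+2 := by omega
    rw [h1, h4]
    have h2 : n-(i+2)+1 = n-(i+1) := by omega
    rw [h2, pow_add, pow_add]
    ring
  rw [hB, hB2, hA]
  -- combine the two range sums and telescope
  have hcomb : (∑ i ∈ Finset.range (n-1),
          ((-1:ℝ)^(i+2) * e (i+2) * (lucasSeq (n-(i+2)+1) : ℝ)
            - 3 * ((-1:ℝ)^(i+1) * e (i+1) * (lucasSeq (n-(i+1)) : ℝ))))
      + ∑ i ∈ Finset.range (n-1),
          (3 * ((-1:ℝ)^i * e i * (lucasSeq (n-i) : ℝ))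
            - (-1:ℝ)^i * e i * (lucasSeq (n-i+1) : ℝ))
      = ∑ i ∈ Finset.range (n-1),
          ((((fun j => (-1:ℝ)^(j+1) * e (j+1) * (lucasSeq (n-(j+1)+1) : ℝ)) (i+1)
              - (fun j => (-1:ℝ)^(j+1) * e (j+1) * (lucasSeq (n-(j+1)+1) : ℝ)) i)
            + ((fun j => (-1:ℝ)^j * e j * (lucasSeq (n-j+1) : ℝ)) (i+1)
              - (fun j => (-1:ℝ)^j * e j * (lucasSeq (n-j+1) : ℝ)) i))
          - 3 * ((fun j => (-1:ℝ)^j * e j * (lucasSeq (n-j) : ℝ)) (i+1)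
              - (fun j => (-1:ℝ)^j * e j * (lucasSeq (n-j) : ℝ)) i)) := by
    rw [← Finset.sum_add_distrib]
    apply Finset.sum_congr rfl
    intro i hi
    simp only []
    ring
  rw [add_assoc, hcomb]
  have hsplit : ∀ (f g h : ℕ → ℝ),
      ∑ i ∈ Finset.range (n-1), (((f (i+1) - f i) + (g (i+1) - g i)) - 3 * (h (i+1) - h i))
        = (f (n-1) - f 0) + (g (n-1) - g 0) - 3 * (h (n-1) - h 0) := by
    intro f g h
    rw [Finset.sum_sub_distrib, Finset.sum_add_distrib, tele, tele, ← Finset.mul_sum, tele]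
  rw [hsplit (fun j => (-1:ℝ)^(j+1) * e (j+1) * (lucasSeq (n-(j+1)+1) : ℝ))
      (fun j => (-1:ℝ)^j * e j * (lucasSeq (n-j+1) : ℝ))
      (fun j => (-1:ℝ)^j * e j * (lucasSeq (n-j) : ℝ))]
  beta_reduce
  have e1 : n - 1 + 1 = n := by omega
  rw [e1]
  have e2 : n - (n-1) = 1 := by omega
  rw [e2]
  have e6 : n - n + 1 = 1 := by omega
  rw [e6]
  have e4 : n - 0 + 1 = n + 1 := by omega
  rw [e4]
  simp only [Nat.sub_zero, zero_add, pow_one, pow_zero, h0]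
  have hL1 : (lucasSeq 1 : ℝ) = 1 := by norm_num [lucasSeq]
  have hL2 : (lucasSeq (1+1) : ℝ) = 3 := by norm_num [lucasSeq]
  rw [hL1, hL2]
  ring

lemma E0 (E : ℝ → ℝ → ℕ → ℝ) (hE : IsGenEulerFamily E) (α x : ℝ) : E α x 0 = 1 := by
  have h := hE α x 0 (by simp [Real.pi_pos])
  have h2 : HasSum (fun k : ℕ => E α x k * (0:ℝ) ^ k / (Nat.factorial k : ℝ)) (E α x 0) := by
    have : (fun k : ℕ => E α x k * (0:ℝ) ^ k / (Nat.factorial k : ℝ))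
        = fun k : ℕ => if k = 0 then E α x 0 else 0 := by
      funext k
      rcases k with _ | k <;> simp
    rw [this]
    exact hasSum_ite_eq 0 (E α x 0)
  have := h2.unique h
  rw [this]
  norm_num [Real.exp_zero, Real.one_rpow]

lemma fDeriv (α x : ℝ) :
    HasDerivAt (fun z : ℝ => (2 / (Real.exp z + 1)) ^ α * Real.exp (x * z)) (x - α / 2) 0 := by
  have hu : HasDerivAt (fun z : ℝ => Real.exp z + 1) (Real.exp 0) 0 :=
    (Real.hasDerivAt_exp 0).add_const 1
  have hq : HasDerivAt (fun z : ℝ => 2 / (Real.exp z + 1))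
      ((0 * (Real.exp 0 + 1) - 2 * Real.exp 0) / (Real.exp 0 + 1) ^ 2) 0 :=
    (hasDerivAt_const 0 (2:ℝ)).div hu (by positivity)
  have hq' : HasDerivAt (fun z : ℝ => 2 / (Real.exp z + 1)) (-1/2) 0 := by
    convert hq using 1
    rw [Real.exp_zero]; norm_num
  have hr := hq'.rpow_const (p := α) (Or.inl (by rw [Real.exp_zero]; norm_num))
  have hs : HasDerivAt (fun z : ℝ => Real.exp (x * z)) (Real.exp (x * 0) * x) 0 := by
    exact (Real.hasDerivAt_exp (x * 0)).comp 0 ((hasDerivAt_id 0).const_mul x) |>.congr_deriv (by ring)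
  have := hr.mul hs
  refine this.congr_deriv ?_
  symm
  rw [Real.exp_zero, mul_zero, Real.exp_zero]
  norm_num [Real.one_rpow]
  ring

set_option maxHeartbeats 1000000 in
lemma E1 (E : ℝ → ℝ → ℕ → ℝ) (hE : IsGenEulerFamily E) (α x : ℝ) : E α x 1 = x - α / 2 := by
  have h1 : Summable (fun k : ℕ => |E α x k| / (Nat.factorial k : ℝ)) := by
    have hh := (hE α x 1 (by rw [abs_one]; linarith [Real.pi_gt_three])).summable
    rw [← summable_abs_iff] at hh
    refine hh.congr fun k => ?_
    rw [abs_div, Nat.abs_cast, one_pow, mul_one]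
  have h2 : Summable (fun n : ℕ => |E α x (n+2)| / (Nat.factorial (n+2) : ℝ)) :=
    (summable_nat_add_iff 2).mpr h1
  set C : ℝ := ∑' n : ℕ, |E α x (n+2)| / (Nat.factorial (n+2) : ℝ) with hC
  have key : ∀ z : ℝ, |z| ≤ 1 →
      |((2 / (Real.exp z + 1)) ^ α * Real.exp (x * z)) - E α x 0 - E α x 1 * z| ≤ C * |z|^2 := by
    intro z hz
    have hπ : |z| < Real.pi := lt_of_le_of_lt hz (by linarith [Real.pi_gt_three])
    have hsum := hE α x z hπ
    set S : ℝ := ((2 / (Real.exp z + 1)) ^ α * Real.exp (x * z)) - E α x 0 - E α x 1 * z with hS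
    have h3 : HasSum (fun k : ℕ => E α x k * z ^ k / (Nat.factorial k : ℝ))
        (S + ∑ i ∈ Finset.range 2, E α x i * z ^ i / (Nat.factorial i : ℝ)) := by
      convert hsum using 1
      rw [Finset.sum_range_succ, Finset.sum_range_one]
      simp [hS, Nat.factorial]
    have htail : HasSum (fun n : ℕ => E α x (n+2) * z ^ (n+2) / (Nat.factorial (n+2) : ℝ)) S :=
      (hasSum_nat_add_iff (f := fun k : ℕ => E α x k * z ^ k / (Nat.factorial k : ℝ)) 2).mpr h3
    have hsabs : Summable (fun n : ℕ => |E α x (n+2) * z ^ (n+2) / (Nat.factorial (n+2) : ℝ)|) :=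
      summable_abs_iff.mpr htail.summable
    have habs : |S| ≤ ∑' n : ℕ, |E α x (n+2) * z ^ (n+2) / (Nat.factorial (n+2) : ℝ)| := by
      rw [← htail.tsum_eq]
      have h3 : Summable fun n : ℕ => ‖E α x (n+2) * z ^ (n+2) / (Nat.factorial (n+2) : ℝ)‖ := by
        simpa only [Real.norm_eq_abs] using hsabs
      have h4 := norm_tsum_le_tsum_norm h3
      simpa only [Real.norm_eq_abs] using h4
    have hterm : ∀ n : ℕ, |E α x (n+2) * z ^ (n+2) / (Nat.factorial (n+2) : ℝ)|
        ≤ |E α x (n+2)| / (Nat.factorial (n+2) : ℝ) * |z|^2 := by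
      intro n
      rw [abs_div, abs_mul, abs_pow, Nat.abs_cast, div_mul_eq_mul_div]
      have hpow : |z| ^ (n+2) ≤ |z| ^ 2 := pow_le_pow_of_le_one (abs_nonneg z) hz (by omega)
      have h6 := mul_le_mul_of_nonneg_left hpow (abs_nonneg (E α x (n+2)))
      exact (div_le_div_iff_of_pos_right (by positivity)).mpr h6
    have hsum2 : (∑' n : ℕ, |E α x (n+2) * z ^ (n+2) / (Nat.factorial (n+2) : ℝ)|)
        ≤ ∑' n : ℕ, |E α x (n+2)| / (Nat.factorial (n+2) : ℝ) * |z|^2 :=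
      Summable.tsum_le_tsum hterm hsabs (h2.mul_right _)
    rw [tsum_mul_right] at hsum2
    exact le_trans habs hsum2
  have hf0 : ((2 / (Real.exp 0 + 1)) ^ α * Real.exp (x * 0)) = E α x 0 := by
    rw [E0 E hE α x, Real.exp_zero, mul_zero, Real.exp_zero]
    norm_num [Real.one_rpow]
  have hd : HasDerivAt (fun z : ℝ => (2 / (Real.exp z + 1)) ^ α * Real.exp (x * z)) (E α x 1) 0 := by
    rw [hasDerivAt_iff_isLittleO]
    have hO : (fun z : ℝ => ((2 / (Real.exp z + 1)) ^ α * Real.exp (x * z))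
          - ((2 / (Real.exp 0 + 1)) ^ α * Real.exp (x * 0)) - (z - 0) • E α x 1)
        =O[nhds 0] fun z => z^2 := by
      rw [Asymptotics.isBigO_iff]
      refine ⟨C, ?_⟩
      have hev : ∀ᶠ z : ℝ in nhds 0, |z| ≤ 1 := by
        filter_upwards [Metric.ball_mem_nhds (0:ℝ) one_pos] with z hz
        rw [Metric.mem_ball, Real.dist_eq, sub_zero] at hz
        exact le_of_lt hz
      filter_upwards [hev] with z hz
      rw [hf0, smul_eq_mul, sub_zero, mul_comm z (E α x 1), Real.norm_eq_abs,
        Real.norm_eq_abs, abs_pow]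
      exact key z hz
    exact hO.trans_isLittleO
      (by simpa using Asymptotics.isLittleO_pow_pow (𝕜 := ℝ) (m := 1) (n := 2) one_lt_two)
  exact hd.unique (fDeriv α x)

theorem euler_lucas_alternating_identity (E : ℝ → ℝ → ℕ → ℝ) (hE : IsGenEulerFamily E)
    (α x : ℝ) (n : ℕ) (hn : 2 ≤ n) :
    (-1 : ℝ) ^ n * E α x n
      = (lucasSeq (n + 1) : ℝ) - (x - α / 2 + 3) * (lucasSeq n : ℝ)
        + ∑ k ∈ Finset.Icc 2 n,
            (-1 : ℝ) ^ k * (E α x k + 3 * E α x (k - 1)) * (lucasSeq (n - k + 1) : ℝ)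
        + 5 * ∑ k ∈ Finset.Icc 2 n, ∑ s ∈ Finset.Icc 0 (k - 2),
            (-1 : ℝ) ^ k * 2 ^ (k - s - 2) * (lucasSeq (n - k + 1) : ℝ) * E α x s := by
  have h0 := E0 E hE α x
  have h1 := E1 E hE α x
  have hm := main_comb (E α x) h0 n hn
  rw [h1] at hm
  exact hm
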